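/- Let D be a PVMD, let P be a maximal t-ideal of D, and let I and J be rigid ideals of D contained in P (P-ideals). Then I ⊆ J or J ⊆ I, i.e., the set of P-ideals is totally ordered by inclusion. -/

import Mathlib

open scoped nonZeroDivisors

variable (D : Type*) [CommRing D] [IsDomain D]
variable (K : Type*) [Field K] [Algebra D K] [IsFractionRing D K]

/-- The `v`-operation: `I_v = (I⁻¹)⁻¹`, viewed as a `D`-submodule of `K`. -/
noncomputable def vSub (I : FractionalIdeal D⁰ K) : Submodule D K :=
  (((I⁻¹)⁻¹ : FractionalIdeal D⁰ K) : Submodule D K)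

/-- The `t`-operation: `I_t = ⋃ {J_v : J ⊆ I nonzero finitely generated}`. -/
noncomputable def tSub (I : FractionalIdeal D⁰ K) : Submodule D K :=
  ⨆ J : {J : FractionalIdeal D⁰ K // J ≠ 0 ∧ (J : Submodule D K).FG ∧ J ≤ I}, vSub D K J.1

/-- A fractional ideal `I` is `t`-invertible if `(I * I⁻¹)_t = D`. -/
noncomputable def IsTInvertible (I : FractionalIdeal D⁰ K) : Prop :=
  tSub D K (I * I⁻¹) = ((1 : FractionalIdeal D⁰ K) : Submodule D K)

/-- An integral ideal `I` of `D` is a `t`-ideal if `I_t = I`. -/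
noncomputable def IsTIdeal (I : Ideal D) : Prop :=
  tSub D K (I : FractionalIdeal D⁰ K) = ((I : FractionalIdeal D⁰ K) : Submodule D K)

/-- `D` is a PVMD: every nonzero finitely generated integral ideal is `t`-invertible. -/
noncomputable def IsPVMD : Prop :=
  ∀ I : Ideal D, I ≠ ⊥ → I.FG → IsTInvertible D K (I : FractionalIdeal D⁰ K)

/-- `P` is a maximal `t`-ideal: a proper integral `t`-ideal maximal among such. -/
noncomputable def IsMaximalTIdeal (P : Ideal D) : Prop :=
  IsTIdeal D K P ∧ P ≠ ⊤ ∧ ∀ Q : Ideal D, IsTIdeal D K Q → Q ≠ ⊤ → P ≤ Q → P = Q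

/-- `I` is a rigid ideal contained in the maximal `t`-ideal `P` (a `P`-ideal):
a `v`-ideal of finite type contained in `P` and in no other maximal `t`-ideal. -/
noncomputable def IsPIdeal (P I : Ideal D) : Prop :=
  (∃ A : Ideal D, A ≠ ⊥ ∧ A.FG ∧
      ((I : FractionalIdeal D⁰ K) : Submodule D K) = vSub D K (A : FractionalIdeal D⁰ K)) ∧
    I ≤ P ∧ ∀ Q : Ideal D, IsMaximalTIdeal D K Q → I ≤ Q → Q = P

namespace PvmdAux

open FractionalIdeal

variable {D : Type*} [CommRing D] [IsDomain D]
variable {K : Type*} [Field K] [Algebra D K] [IsFractionRing D K]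

lemma inv_ne_zero' {I : FractionalIdeal D⁰ K} (hI : I ≠ 0) : I⁻¹ ≠ 0 := by
  obtain ⟨a, ha, h⟩ := I.isFractional
  have hmem : (algebraMap D K a) ∈ I⁻¹ := by
    rw [mem_inv_iff hI]
    intro y hy
    rw [← Algebra.smul_def]
    obtain ⟨x, hx⟩ := h y hy
    exact (mem_one_iff _).mpr ⟨x, hx⟩
  intro h0
  rw [h0] at hmem
  exact IsFractionRing.to_map_ne_zero_of_mem_nonZeroDivisors ha
    ((mem_zero_iff _).mp hmem)

lemma ne_zero_of_le {I J : FractionalIdeal D⁰ K} (hI : I ≠ 0) (h : I ≤ J) : J ≠ 0 :=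
  fun h0 => hI (le_antisymm (h0 ▸ h) (zero_le _))

lemma inv_anti {I J : FractionalIdeal D⁰ K} (hI : I ≠ 0) (h : I ≤ J) : J⁻¹ ≤ I⁻¹ :=
  inv_anti_mono hI (ne_zero_of_le hI h) h

lemma le_v {I : FractionalIdeal D⁰ K} (hI : I ≠ 0) : I ≤ (I⁻¹)⁻¹ := by
  rw [inv_eq (I := I⁻¹), le_div_iff_mul_le (inv_ne_zero' hI)]
  exact mul_one_div_le_one

lemma v_mono {I J : FractionalIdeal D⁰ K} (hI : I ≠ 0) (h : I ≤ J) :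
    (I⁻¹)⁻¹ ≤ (J⁻¹)⁻¹ :=
  inv_anti (inv_ne_zero' (ne_zero_of_le hI h)) (inv_anti hI h)

lemma inv_inv_inv (I : FractionalIdeal D⁰ K) : ((I⁻¹)⁻¹)⁻¹ = I⁻¹ := by
  rcases eq_or_ne I 0 with rfl | hI
  · rw [inv_zero', inv_zero', inv_zero']
  · exact le_antisymm (inv_anti hI (le_v hI)) (le_v (inv_ne_zero' hI))

lemma exists_ne_zero_mem {I : FractionalIdeal D⁰ K} (hI : I ≠ 0) :
    ∃ x ∈ I, x ≠ (0 : K) := by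
  by_contra h
  push_neg at h
  exact hI (eq_zero_iff.mpr h)

lemma mul_ne_zero' {I J : FractionalIdeal D⁰ K} (hI : I ≠ 0) (hJ : J ≠ 0) :
    I * J ≠ 0 := by
  obtain ⟨x, hxI, hx⟩ := exists_ne_zero_mem hI
  obtain ⟨y, hyJ, hy⟩ := exists_ne_zero_mem hJ
  intro h0
  have : x * y ∈ I * J := mul_mem_mul hxI hyJ
  rw [h0] at this
  exact mul_ne_zero hx hy ((mem_zero_iff _).mp this)

lemma mul_v (E F : FractionalIdeal D⁰ K) : E * (F⁻¹)⁻¹ ≤ ((E * F)⁻¹)⁻¹ := by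
  rcases eq_or_ne E 0 with rfl | hE
  · rw [zero_mul]; exact zero_le _
  rcases eq_or_ne F 0 with rfl | hF
  · rw [inv_zero', inv_zero', mul_zero]; exact zero_le _
  have hEF : E * F ≠ 0 := mul_ne_zero' hE hF
  rw [inv_eq (I := (E * F)⁻¹), le_div_iff_mul_le (inv_ne_zero' hEF)]
  have h1 : E * (E * F)⁻¹ ≤ F⁻¹ := by
    rw [inv_eq (I := F), le_div_iff_mul_le hF]
    calc E * (E * F)⁻¹ * F = (E * F) * (E * F)⁻¹ := by ring
      _ ≤ 1 := mul_one_div_le_one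
  calc E * (F⁻¹)⁻¹ * (E * F)⁻¹ = (F⁻¹)⁻¹ * (E * (E * F)⁻¹) := by ring
    _ ≤ (F⁻¹)⁻¹ * F⁻¹ := mul_right_mono (a := _) h1
    _ = F⁻¹ * (1 / F⁻¹) := by rw [mul_comm]; rfl
    _ ≤ 1 := mul_one_div_le_one

end PvmdAux

section TSub

open FractionalIdeal PvmdAux

variable {D : Type*} [CommRing D] [IsDomain D]
variable {K : Type*} [Field K] [Algebra D K] [IsFractionRing D K]

lemma vSub_mono {I J : FractionalIdeal D⁰ K} (h : I ≤ J) : vSub D K I ≤ vSub D K J := by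
  rcases eq_or_ne I 0 with rfl | hI
  · have : vSub D K (0 : FractionalIdeal D⁰ K) = ⊥ := by
      simp only [vSub]
      rw [inv_zero', inv_zero', coe_zero]
    rw [this]
    exact bot_le
  · exact coe_le_coe.mpr (v_mono hI h)

lemma vSub_le_tSub {G I : FractionalIdeal D⁰ K} (h1 : G ≠ 0) (h2 : (G : Submodule D K).FG)
    (h3 : G ≤ I) : vSub D K G ≤ tSub D K I :=
  le_iSup (fun J : {J : FractionalIdeal D⁰ K // J ≠ 0 ∧ (J : Submodule D K).FG ∧ J ≤ I} =>
    vSub D K J.1) ⟨G, h1, h2, h3⟩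

lemma tSub_mono {I J : FractionalIdeal D⁰ K} (h : I ≤ J) : tSub D K I ≤ tSub D K J :=
  iSup_le fun G => vSub_le_tSub G.2.1 G.2.2.1 (G.2.2.2.trans h)

lemma tSub_le_vSub (I : FractionalIdeal D⁰ K) : tSub D K I ≤ vSub D K I :=
  iSup_le fun G => vSub_mono G.2.2.2

lemma le_tSub (I : FractionalIdeal D⁰ K) : (I : Submodule D K) ≤ tSub D K I := by
  intro x hx
  rcases eq_or_ne x 0 with rfl | hx0
  · exact zero_mem _
  refine vSub_le_tSub (G := spanSingleton D⁰ x) (spanSingleton_eq_zero_iff.ne.mpr hx0)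
    ?_ (spanSingleton_le_iff_mem.mpr hx) ?_
  · rw [coe_spanSingleton]
    exact Submodule.fg_span_singleton x
  · show x ∈ vSub D K (spanSingleton D⁰ x)
    apply coe_le_coe.mpr (le_v (spanSingleton_eq_zero_iff.ne.mpr hx0))
    exact mem_coe.mpr ((spanSingleton_le_iff_mem (I := spanSingleton D⁰ x)).mp le_rfl)

lemma vSub_one : vSub D K (1 : FractionalIdeal D⁰ K) = ((1 : FractionalIdeal D⁰ K) : Submodule D K) := by
  have h1 : (1 : FractionalIdeal D⁰ K)⁻¹ = 1 := by
    rw [inv_eq]; exact FractionalIdeal.div_one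
  simp only [vSub, h1]

lemma tSub_one : tSub D K (1 : FractionalIdeal D⁰ K) = ((1 : FractionalIdeal D⁰ K) : Submodule D K) :=
  le_antisymm ((tSub_le_vSub _).trans vSub_one.le) (le_tSub _)

lemma vSub_coe_v (G : FractionalIdeal D⁰ K) : vSub D K ((G⁻¹)⁻¹) = vSub D K G := by
  simp only [vSub, inv_inv_inv]

lemma le_add_left' {a b : FractionalIdeal D⁰ K} : a ≤ a + b := by
  rw [← sup_eq_add]; exact le_sup_left

lemma le_add_right' {a b : FractionalIdeal D⁰ K} : b ≤ a + b := by
  rw [← sup_eq_add]; exact le_sup_right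

lemma add_le' {a b c : FractionalIdeal D⁰ K} (h1 : a ≤ c) (h2 : b ≤ c) : a + b ≤ c := by
  rw [← sup_eq_add]; exact sup_le h1 h2

lemma tSub_directed (I : FractionalIdeal D⁰ K) :
    Directed (· ≤ ·) (fun J : {J : FractionalIdeal D⁰ K // J ≠ 0 ∧ (J : Submodule D K).FG ∧ J ≤ I} =>
      vSub D K J.1) := by
  rintro ⟨a, ha0, hafg, hale⟩ ⟨b, hb0, hbfg, hble⟩
  refine ⟨⟨a + b, ?_, ?_, ?_⟩, vSub_mono le_add_left', vSub_mono le_add_right'⟩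
  · exact ne_zero_of_le ha0 le_add_left'
  · rw [coe_add]
    exact hafg.sup hbfg
  · exact add_le' hale hble

lemma tSub_eq_of_coe_eq {E E' : FractionalIdeal D⁰ K}
    (h : (E' : Submodule D K) = tSub D K E) : tSub D K E' = tSub D K E := by
  refine le_antisymm ?_ ?_
  · refine iSup_le ?_
    rintro ⟨G, hG0, hGfg, hGle⟩
    have hGle' : (G : Submodule D K) ≤ tSub D K E := h ▸ coe_le_coe.mpr hGle
    cases isEmpty_or_nonempty
        {J : FractionalIdeal D⁰ K // J ≠ 0 ∧ (J : Submodule D K).FG ∧ J ≤ E} with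
    | inl hempty =>
        exfalso
        rw [tSub, iSup_of_empty] at hGle'
        exact hG0 (coeToSubmodule_eq_bot.mp (le_bot_iff.mp hGle'))
    | inr hne =>
        have hcompact := (Submodule.fg_iff_compact _).mp hGfg
        rw [CompleteLattice.isCompactElement_iff_le_of_directed_sSup_le] at hcompact
        obtain ⟨M, hMmem, hGM⟩ := hcompact _ (Set.range_nonempty _)
          ((directedOn_range).mpr (tSub_directed E)) (by rwa [sSup_range])
        obtain ⟨⟨M', hM0, hMfg, hMle⟩, rfl⟩ := hMmem
        have : G ≤ (M'⁻¹)⁻¹ := coe_le_coe.mp hGM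
        calc vSub D K G ≤ vSub D K ((M'⁻¹)⁻¹) := vSub_mono this
          _ = vSub D K M' := vSub_coe_v M'
          _ ≤ tSub D K E := vSub_le_tSub hM0 hMfg hMle
  · refine iSup_le ?_
    rintro ⟨G, hG0, hGfg, hGle⟩
    have hEE' : E ≤ E' := coe_le_coe.mp ((le_tSub E).trans h.ge)
    exact vSub_le_tSub hG0 hGfg (hGle.trans hEE')

end TSub

section Main

open FractionalIdeal PvmdAux

variable {D : Type*} [CommRing D] [IsDomain D]
variable {K : Type*} [Field K] [Algebra D K] [IsFractionRing D K]

lemma coeIdeal_fg' {A : Ideal D} (hA : A.FG) :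
    (((A : FractionalIdeal D⁰ K)) : Submodule D K).FG := by
  rw [coe_coeIdeal]
  show (Submodule.map (Algebra.linearMap D K) A).FG
  exact Submodule.FG.map _ hA

lemma tIdeal_of_v {I : Ideal D} {A : FractionalIdeal D⁰ K}
    (h : (I : FractionalIdeal D⁰ K) = (A⁻¹)⁻¹) : IsTIdeal D K I := by
  refine le_antisymm ?_ (le_tSub _)
  calc tSub D K (I : FractionalIdeal D⁰ K)
      ≤ vSub D K (I : FractionalIdeal D⁰ K) := tSub_le_vSub _
    _ = vSub D K ((A⁻¹)⁻¹) := by rw [h]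
    _ = vSub D K A := vSub_coe_v A
    _ = (((A⁻¹)⁻¹ : FractionalIdeal D⁰ K) : Submodule D K) := rfl
    _ = ((I : FractionalIdeal D⁰ K) : Submodule D K) := by rw [← h]

lemma v_le_one {C : FractionalIdeal D⁰ K} (h0 : C ≠ 0) (h1 : C ≤ 1) : (C⁻¹)⁻¹ ≤ 1 := by
  have hone : ((1 : FractionalIdeal D⁰ K)⁻¹)⁻¹ = 1 := by
    have h1' : (1 : FractionalIdeal D⁰ K)⁻¹ = 1 := by
      rw [inv_eq]; exact FractionalIdeal.div_one
    rw [h1', h1']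
  exact hone ▸ v_mono h0 h1

lemma finset_chain_bound {c : Set (Ideal D)} (hchain : IsChain (· ≤ ·) c) {y : Ideal D}
    (hy : y ∈ c) (T : Finset K)
    (h : ∀ x ∈ T, ∃ Q ∈ c, x ∈ (((Q : FractionalIdeal D⁰ K)) : Submodule D K)) :
    ∃ Q ∈ c, ∀ x ∈ T, x ∈ (((Q : FractionalIdeal D⁰ K)) : Submodule D K) := by
  classical
  induction T using Finset.induction with
  | empty => exact ⟨y, hy, by simp⟩
  | @insert a T ha ih =>
      obtain ⟨Q1, hQ1c, hQ1⟩ := h a (Finset.mem_insert_self a T)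
      obtain ⟨Q2, hQ2c, hQ2⟩ := ih (fun x hx => h x (Finset.mem_insert_of_mem hx))
      have hmono : ∀ {R S : Ideal D}, R ≤ S →
          (((R : FractionalIdeal D⁰ K)) : Submodule D K) ≤
            (((S : FractionalIdeal D⁰ K)) : Submodule D K) := fun hRS =>
        coe_le_coe.mpr ((coeIdeal_le_coeIdeal K).mpr hRS)
      rcases hchain.total hQ1c hQ2c with hle | hle
      · refine ⟨Q2, hQ2c, fun x hx => ?_⟩
        rcases Finset.mem_insert.mp hx with rfl | hx
        · exact hmono hle hQ1
        · exact hQ2 x hx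
      · refine ⟨Q1, hQ1c, fun x hx => ?_⟩
        rcases Finset.mem_insert.mp hx with rfl | hx
        · exact hQ1
        · exact hmono hle (hQ2 x hx)

lemma exists_maximal_tIdeal (X : Ideal D) (hX : IsTIdeal D K X) (hXtop : X ≠ ⊤) :
    ∃ Q : Ideal D, IsMaximalTIdeal D K Q ∧ X ≤ Q := by
  have key := zorn_le_nonempty₀ {Q : Ideal D | IsTIdeal D K Q ∧ Q ≠ ⊤} ?_ X ⟨hX, hXtop⟩
  · obtain ⟨m, hXm, hm⟩ := key
    exact ⟨m, ⟨hm.1.1, hm.1.2, fun Q hQ1 hQ2 hle => le_antisymm hle (hm.2 ⟨hQ1, hQ2⟩ hle)⟩, hXm⟩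
  · rintro c hcs hchain y hy
    have hdir : DirectedOn (· ≤ ·) c := hchain.directedOn
    have hne : c.Nonempty := ⟨y, hy⟩
    refine ⟨sSup c, ⟨?_, ?_⟩, fun z hz => le_sSup hz⟩
    · -- sSup c is a t-ideal
      refine le_antisymm ?_ (le_tSub _)
      refine iSup_le ?_
      rintro ⟨G, hG0, hGfg, hGle⟩
      obtain ⟨T, hT⟩ := id hGfg
      have hmem : ∀ x ∈ T, ∃ Q ∈ c, x ∈ (((Q : FractionalIdeal D⁰ K)) : Submodule D K) := by
        intro x hx
        have hxG : x ∈ (G : Submodule D K) := by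
          rw [← hT]; exact Submodule.subset_span hx
        have : x ∈ ((sSup c : Ideal D) : FractionalIdeal D⁰ K) := (coe_le_coe.mpr hGle) hxG
        obtain ⟨x', hx', rfl⟩ := (mem_coeIdeal _).mp this
        obtain ⟨Q, hQc, hxQ⟩ := (Submodule.mem_sSup_of_directed hne hdir).mp hx'
        exact ⟨Q, hQc, (mem_coeIdeal _).mpr ⟨x', hxQ, rfl⟩⟩
      obtain ⟨Q, hQc, hQall⟩ := finset_chain_bound hchain hy T hmem
      have hGQ : G ≤ (Q : FractionalIdeal D⁰ K) := by
        refine coe_le_coe.mp ?_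
        rw [← hT]
        exact Submodule.span_le.mpr fun x hx => hQall x hx
      calc vSub D K G ≤ tSub D K ((Q : FractionalIdeal D⁰ K)) := vSub_le_tSub hG0 hGfg hGQ
        _ = (((Q : FractionalIdeal D⁰ K)) : Submodule D K) := (hcs hQc).1
        _ ≤ (((sSup c : Ideal D) : FractionalIdeal D⁰ K) : Submodule D K) :=
            coe_le_coe.mpr ((coeIdeal_le_coeIdeal K).mpr (le_sSup hQc))
    · -- sSup c ≠ ⊤
      intro htop
      have h1 : (1 : D) ∈ sSup c := htop ▸ Submodule.mem_top
      obtain ⟨Q, hQc, hQ1⟩ := (Submodule.mem_sSup_of_directed hne hdir).mp h1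
      exact (hcs hQc).2 ((Ideal.eq_top_iff_one Q).mpr hQ1)

lemma mul_tSub_le' {E Z : FractionalIdeal D⁰ K} {A Q : Ideal D}
    (hA0 : A ≠ ⊥) (hAfg : A.FG)
    (hE : E = (((A : FractionalIdeal D⁰ K))⁻¹)⁻¹)
    (hQ : IsTIdeal D K Q)
    (hZ : E * Z ≤ (Q : FractionalIdeal D⁰ K)) :
    (E : Submodule D K) * tSub D K Z ≤ (((Q : FractionalIdeal D⁰ K)) : Submodule D K) := by
  have hmul : (E : Submodule D K) * tSub D K Z =
      ⨆ G : {G : FractionalIdeal D⁰ K // G ≠ 0 ∧ (G : Submodule D K).FG ∧ G ≤ Z},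
        (E : Submodule D K) * vSub D K G.1 := Submodule.mul_iSup _ _
  rw [hmul]
  refine iSup_le ?_
  rintro ⟨G, hG0, hGfg, hGle⟩
  have hA0' : (A : FractionalIdeal D⁰ K) ≠ 0 := coeIdeal_ne_zero.mpr hA0
  have hAE : (A : FractionalIdeal D⁰ K) ≤ E := hE ▸ le_v hA0'
  have hAG0 : (A : FractionalIdeal D⁰ K) * G ≠ 0 := mul_ne_zero' hA0' hG0
  have step1 : E * (G⁻¹)⁻¹ ≤ ((((A : FractionalIdeal D⁰ K)) * G)⁻¹)⁻¹ := by
    rw [hE]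
    have ha : ((G⁻¹)⁻¹ : FractionalIdeal D⁰ K) * (A : FractionalIdeal D⁰ K) ≤
        ((((A : FractionalIdeal D⁰ K)) * G)⁻¹)⁻¹ := by
      rw [mul_comm]
      exact mul_v _ _
    have hb : (((A : FractionalIdeal D⁰ K))⁻¹)⁻¹ * (G⁻¹)⁻¹ ≤
        ((((G⁻¹)⁻¹ : FractionalIdeal D⁰ K) * (A : FractionalIdeal D⁰ K))⁻¹)⁻¹ := by
      rw [mul_comm ((((A : FractionalIdeal D⁰ K))⁻¹)⁻¹) ((G⁻¹)⁻¹ : FractionalIdeal D⁰ K)]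
      exact mul_v _ _
    have hGA0 : ((G⁻¹)⁻¹ : FractionalIdeal D⁰ K) * (A : FractionalIdeal D⁰ K) ≠ 0 :=
      mul_ne_zero' (inv_ne_zero' (inv_ne_zero' hG0)) hA0'
    calc (((A : FractionalIdeal D⁰ K))⁻¹)⁻¹ * (G⁻¹)⁻¹
        ≤ ((((G⁻¹)⁻¹ : FractionalIdeal D⁰ K) * (A : FractionalIdeal D⁰ K))⁻¹)⁻¹ := hb
      _ ≤ ((((((A : FractionalIdeal D⁰ K)) * G)⁻¹)⁻¹⁻¹)⁻¹) := v_mono hGA0 ha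
      _ = ((((A : FractionalIdeal D⁰ K)) * G)⁻¹)⁻¹ := by rw [inv_inv_inv]
  have hAGle : (A : FractionalIdeal D⁰ K) * G ≤ (Q : FractionalIdeal D⁰ K) :=
    le_trans (le_trans (mul_left_mono (a := G) hAE) (mul_right_mono (a := E) hGle)) hZ
  have hAGfg : (((A : FractionalIdeal D⁰ K) * G : FractionalIdeal D⁰ K) : Submodule D K).FG := by
    rw [coe_mul]
    exact (coeIdeal_fg' hAfg).mul hGfg
  calc (E : Submodule D K) * vSub D K G
      = ((E * (G⁻¹)⁻¹ : FractionalIdeal D⁰ K) : Submodule D K) := (coe_mul _ _).symm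
    _ ≤ vSub D K ((A : FractionalIdeal D⁰ K) * G) := coe_le_coe.mpr step1
    _ ≤ tSub D K ((Q : FractionalIdeal D⁰ K)) := vSub_le_tSub hAG0 hAGfg hAGle
    _ = (((Q : FractionalIdeal D⁰ K)) : Submodule D K) := hQ

lemma le_mul_of_one_mem {M N : Submodule D K} (h : (1 : K) ∈ N) : M ≤ M * N := by
  intro x hx
  have := Submodule.mul_mem_mul hx h
  rwa [mul_one] at this

lemma caseOne {I A C : Ideal D} {H : FractionalIdeal D⁰ K}
    (hC0 : C ≠ ⊥) (hCfg : C.FG)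
    (hH : H = (((C : FractionalIdeal D⁰ K))⁻¹)⁻¹)
    (hIF : (I : FractionalIdeal D⁰ K) = (((A : FractionalIdeal D⁰ K))⁻¹)⁻¹)
    (ht : tSub D K ((I : FractionalIdeal D⁰ K) * H⁻¹) =
      ((1 : FractionalIdeal D⁰ K) : Submodule D K)) :
    H ≤ (I : FractionalIdeal D⁰ K) := by
  have hIt : IsTIdeal D K I := tIdeal_of_v hIF
  have hHHinv : H * H⁻¹ ≤ 1 := by rw [inv_eq]; exact mul_one_div_le_one
  have hZ : H * ((I : FractionalIdeal D⁰ K) * H⁻¹) ≤ (I : FractionalIdeal D⁰ K) := by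
    calc H * ((I : FractionalIdeal D⁰ K) * H⁻¹)
        = (I : FractionalIdeal D⁰ K) * (H * H⁻¹) := by ring
      _ ≤ (I : FractionalIdeal D⁰ K) * 1 := mul_right_mono (a := _) hHHinv
      _ = (I : FractionalIdeal D⁰ K) := mul_one _
  have h1 : (H : Submodule D K) ≤
      (H : Submodule D K) * tSub D K ((I : FractionalIdeal D⁰ K) * H⁻¹) := by
    refine le_mul_of_one_mem ?_
    rw [ht]
    exact mem_coe.mpr (one_mem_one _)
  have h2 := mul_tSub_le' hC0 hCfg hH hIt hZ
  exact coe_le_coe.mp (h1.trans h2)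

lemma caseTwo {P I A : Ideal D} {H : FractionalIdeal D⁰ K}
    (hP : IsMaximalTIdeal D K P)
    (hA0 : A ≠ ⊥) (hAfg : A.FG)
    (hIF : (I : FractionalIdeal D⁰ K) = (((A : FractionalIdeal D⁰ K))⁻¹)⁻¹)
    (hrig : ∀ Q : Ideal D, IsMaximalTIdeal D K Q → I ≤ Q → Q = P)
    (hHH : tSub D K (H * H⁻¹) = ((1 : FractionalIdeal D⁰ K) : Submodule D K))
    (hH1 : H ≤ 1)
    (hIH : (I : FractionalIdeal D⁰ K) ≤ H)
    (hX : tSub D K ((I : FractionalIdeal D⁰ K) * H⁻¹) ≠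
      ((1 : FractionalIdeal D⁰ K) : Submodule D K)) :
    tSub D K ((I : FractionalIdeal D⁰ K) * H⁻¹) ≤
      (((P : FractionalIdeal D⁰ K)) : Submodule D K) := by
  set IF := (I : FractionalIdeal D⁰ K) with hIFdef
  set X := IF * H⁻¹ with hXdef
  have hHHinv : H * H⁻¹ ≤ 1 := by rw [inv_eq]; exact mul_one_div_le_one
  have hX1 : X ≤ 1 := le_trans (mul_left_mono (a := _) hIH) hHHinv
  have htle1 : tSub D K X ≤ ((1 : FractionalIdeal D⁰ K) : Submodule D K) := by
    rw [← tSub_one]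
    exact tSub_mono hX1
  set Q0 : Ideal D := Submodule.comap (Algebra.linearMap D K) (tSub D K X) with hQ0def
  have hQ0coe : (((Q0 : FractionalIdeal D⁰ K)) : Submodule D K) = tSub D K X := by
    rw [coe_coeIdeal]
    show Submodule.map (Algebra.linearMap D K)
      (Submodule.comap (Algebra.linearMap D K) (tSub D K X)) = _
    rw [Submodule.map_comap_eq]
    refine inf_eq_right.mpr (htle1.trans ?_)
    rw [coe_one, Submodule.one_eq_range]
  have hQ0t : IsTIdeal D K Q0 := by
    show tSub D K _ = _
    rw [hQ0coe]
    exact tSub_eq_of_coe_eq hQ0coe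
  have hQ0top : Q0 ≠ ⊤ := by
    intro h
    rw [h, coeIdeal_top] at hQ0coe
    exact hX hQ0coe.symm
  obtain ⟨Q, hQmax, hQ0Q⟩ := exists_maximal_tIdeal Q0 hQ0t hQ0top
  have hXQ : X ≤ (Q : FractionalIdeal D⁰ K) := by
    refine coe_le_coe.mp ((le_tSub X).trans ?_)
    rw [← hQ0coe]
    exact coe_le_coe.mpr ((coeIdeal_le_coeIdeal K).mpr hQ0Q)
  have hIQ : I ≤ Q := by
    have h1 : (IF : Submodule D K) ≤ (IF : Submodule D K) * tSub D K (H * H⁻¹) := by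
      refine le_mul_of_one_mem ?_
      rw [hHH]
      exact mem_coe.mpr (one_mem_one _)
    have hZ : IF * (H * H⁻¹) ≤ (Q : FractionalIdeal D⁰ K) := by
      calc IF * (H * H⁻¹) = X * H := by rw [hXdef]; ring
        _ ≤ (Q : FractionalIdeal D⁰ K) * 1 :=
            le_trans (mul_left_mono (a := H) hXQ) (mul_right_mono (a := _) hH1)
        _ = (Q : FractionalIdeal D⁰ K) := mul_one _
    have h2 := mul_tSub_le' hA0 hAfg hIF hQmax.1 hZ
    exact (coeIdeal_le_coeIdeal K).mp (coe_le_coe.mp (h1.trans h2))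
  have hQP : Q = P := hrig Q hQmax hIQ
  calc tSub D K X = (((Q0 : FractionalIdeal D⁰ K)) : Submodule D K) := hQ0coe.symm
    _ ≤ (((Q : FractionalIdeal D⁰ K)) : Submodule D K) :=
        coe_le_coe.mpr ((coeIdeal_le_coeIdeal K).mpr hQ0Q)
    _ = (((P : FractionalIdeal D⁰ K)) : Submodule D K) := by rw [hQP]

end Main

/-- In a PVMD, the set of `P`-ideals is totally ordered by inclusion. -/
theorem stmt_12 (hD : IsPVMD D K) (P : Ideal D) (hP : IsMaximalTIdeal D K P)
    (I J : Ideal D) (hI : IsPIdeal D K P I) (hJ : IsPIdeal D K P J) :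
    I ≤ J ∨ J ≤ I := by
  open FractionalIdeal PvmdAux in
  obtain ⟨⟨A, hA0, hAfg, hIA⟩, hIP, hIrig⟩ := hI
  obtain ⟨⟨B, hB0, hBfg, hJB⟩, hJP, hJrig⟩ := hJ
  have hIF : (I : FractionalIdeal D⁰ K) = (((A : FractionalIdeal D⁰ K))⁻¹)⁻¹ :=
    coeToSubmodule_injective hIA
  have hJF : (J : FractionalIdeal D⁰ K) = (((B : FractionalIdeal D⁰ K))⁻¹)⁻¹ :=
    coeToSubmodule_injective hJB
  set C : Ideal D := A ⊔ B with hCdef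
  have hC0 : C ≠ ⊥ := fun h => hA0 (le_bot_iff.mp (h ▸ (le_sup_left : A ≤ C)))
  have hCfg : C.FG := Submodule.FG.sup hAfg hBfg
  have hA0' : (A : FractionalIdeal D⁰ K) ≠ 0 := coeIdeal_ne_zero.mpr hA0
  have hB0' : (B : FractionalIdeal D⁰ K) ≠ 0 := coeIdeal_ne_zero.mpr hB0
  have hC0' : (C : FractionalIdeal D⁰ K) ≠ 0 := coeIdeal_ne_zero.mpr hC0
  have hCF : (C : FractionalIdeal D⁰ K) = (A : FractionalIdeal D⁰ K) + (B : FractionalIdeal D⁰ K) :=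
    (coeIdeal_sup A B : _)
  set H : FractionalIdeal D⁰ K := (((C : FractionalIdeal D⁰ K))⁻¹)⁻¹ with hHdef
  have hHinv : H⁻¹ = ((C : FractionalIdeal D⁰ K))⁻¹ := inv_inv_inv _
  have hAC : (A : FractionalIdeal D⁰ K) ≤ (C : FractionalIdeal D⁰ K) :=
    (coeIdeal_le_coeIdeal K).mpr le_sup_left
  have hBC : (B : FractionalIdeal D⁰ K) ≤ (C : FractionalIdeal D⁰ K) :=
    (coeIdeal_le_coeIdeal K).mpr le_sup_right
  have hIH : (I : FractionalIdeal D⁰ K) ≤ H := hIF ▸ v_mono hA0' hAC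
  have hJH : (J : FractionalIdeal D⁰ K) ≤ H := hJF ▸ v_mono hB0' hBC
  have hH1 : H ≤ 1 := v_le_one hC0' coeIdeal_le_one
  have hAI : (A : FractionalIdeal D⁰ K) ≤ (I : FractionalIdeal D⁰ K) := hIF ▸ le_v hA0'
  have hBJ : (B : FractionalIdeal D⁰ K) ≤ (J : FractionalIdeal D⁰ K) := hJF ▸ le_v hB0'
  have hPV : tSub D K ((C : FractionalIdeal D⁰ K) * ((C : FractionalIdeal D⁰ K))⁻¹) =
      ((1 : FractionalIdeal D⁰ K) : Submodule D K) := hD C hC0 hCfg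
  have hCH : (C : FractionalIdeal D⁰ K) ≤ H := le_v hC0'
  have hHHle : H * H⁻¹ ≤ 1 := by rw [inv_eq]; exact mul_one_div_le_one
  have hHH : tSub D K (H * H⁻¹) = ((1 : FractionalIdeal D⁰ K) : Submodule D K) := by
    refine le_antisymm ?_ ?_
    · rw [← tSub_one]
      exact tSub_mono hHHle
    · calc ((1 : FractionalIdeal D⁰ K) : Submodule D K)
          = tSub D K ((C : FractionalIdeal D⁰ K) * ((C : FractionalIdeal D⁰ K))⁻¹) := hPV.symm
        _ ≤ tSub D K (H * H⁻¹) := by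
            rw [hHinv]
            exact tSub_mono (mul_left_mono (a := _) hCH)
  set X : FractionalIdeal D⁰ K := (I : FractionalIdeal D⁰ K) * H⁻¹ with hXdef
  set Y : FractionalIdeal D⁰ K := (J : FractionalIdeal D⁰ K) * H⁻¹ with hYdef
  by_cases h1 : tSub D K X = ((1 : FractionalIdeal D⁰ K) : Submodule D K)
  · right
    have hHI : H ≤ (I : FractionalIdeal D⁰ K) := caseOne hC0 hCfg hHdef hIF h1
    exact (coeIdeal_le_coeIdeal K).mp (hJH.trans hHI)
  by_cases h2 : tSub D K Y = ((1 : FractionalIdeal D⁰ K) : Submodule D K)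
  · left
    have hHJ : H ≤ (J : FractionalIdeal D⁰ K) := caseOne hC0 hCfg hHdef hJF h2
    exact (coeIdeal_le_coeIdeal K).mp (hIH.trans hHJ)
  exfalso
  have htX : tSub D K X ≤ (((P : FractionalIdeal D⁰ K)) : Submodule D K) :=
    caseTwo hP hA0 hAfg hIF hIrig hHH hH1 hIH h1
  have htY : tSub D K Y ≤ (((P : FractionalIdeal D⁰ K)) : Submodule D K) :=
    caseTwo hP hB0 hBfg hJF hJrig hHH hH1 hJH h2
  have htXY : tSub D K (X + Y) = ((1 : FractionalIdeal D⁰ K) : Submodule D K) := by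
    refine le_antisymm ?_ ?_
    · rw [← tSub_one]
      refine tSub_mono (add_le' ?_ ?_)
      · exact le_trans (mul_left_mono (a := _) hIH) hHHle
      · exact le_trans (mul_left_mono (a := _) hJH) hHHle
    · calc ((1 : FractionalIdeal D⁰ K) : Submodule D K)
          = tSub D K ((C : FractionalIdeal D⁰ K) * ((C : FractionalIdeal D⁰ K))⁻¹) := hPV.symm
        _ ≤ tSub D K (X + Y) := by
            refine tSub_mono ?_
            have hsplit : (C : FractionalIdeal D⁰ K) * ((C : FractionalIdeal D⁰ K))⁻¹ =
                (A : FractionalIdeal D⁰ K) * H⁻¹ + (B : FractionalIdeal D⁰ K) * H⁻¹ := by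
              rw [hHinv, hCF, add_mul]
            rw [hsplit]
            refine add_le' ?_ ?_
            · exact le_trans (mul_left_mono (a := _) hAI) le_add_left'
            · exact le_trans (mul_left_mono (a := _) hBJ) le_add_right'
  have hfin : tSub D K (X + Y) ≤ (((P : FractionalIdeal D⁰ K)) : Submodule D K) := by
    refine iSup_le ?_
    rintro ⟨G, hG0, hGfg, hGle⟩
    have hGP : G ≤ (P : FractionalIdeal D⁰ K) := by
      refine coe_le_coe.mp ?_
      calc (G : Submodule D K) ≤ ((X + Y : FractionalIdeal D⁰ K) : Submodule D K) :=
            coe_le_coe.mpr hGle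
        _ = (X : Submodule D K) ⊔ (Y : Submodule D K) := by
            rw [coe_add, Submodule.add_eq_sup]
        _ ≤ tSub D K X ⊔ tSub D K Y := sup_le_sup (le_tSub X) (le_tSub Y)
        _ ≤ (((P : FractionalIdeal D⁰ K)) : Submodule D K) := sup_le htX htY
    calc vSub D K G ≤ tSub D K ((P : FractionalIdeal D⁰ K)) := vSub_le_tSub hG0 hGfg hGP
      _ = (((P : FractionalIdeal D⁰ K)) : Submodule D K) := hP.1
  rw [htXY] at hfin
  have hP1 : (1 : FractionalIdeal D⁰ K) ≤ (P : FractionalIdeal D⁰ K) := coe_le_coe.mp hfin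
  have hPtop : P = ⊤ := by
    refine top_le_iff.mp ((coeIdeal_le_coeIdeal K).mp ?_)
    rwa [coeIdeal_top]
  exact hP.2.1 hPtop
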